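/- Assume X ⊆ ℝ^p and Y ⊆ ℝ^q are nonempty, closed and convex; F and G are continuously differentiable and strictly convex on open sets containing X and Y; H ∈ ℝ^{p×q}; and ψ, φ are continuously differentiable strongly convex generating functions for X and Y with mirror maps Pψ, Pφ. Then (x*, y*) ∈ X × Y is a saddle point of L over X × Y if and only if there exist u* ∈ ℝ^p and v* ∈ ℝ^q such that: x* = Pψ(u*), y* = Pφ(v*), u* = ∇ψ(x*) − ∇F(x*) − H y*, and v* = ∇φ(y*) − ∇G(y*) + Hᵀ x* (i.e., (x*, u*, y*, v*) is an equilibrium point of the accelerated dynamics). -/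

import Mathlib

open scoped RealInnerProductSpace
open Set Topology Filter

section Aux
variable {E : Type*} [NormedAddCommGroup E] [InnerProductSpace ℝ E] [CompleteSpace E]

lemma aux_line_deriv {f : E → ℝ} {f' x : E} (hf : HasGradientAt f f' x) (d : E) :
    HasDerivAt (fun t : ℝ => f (x + t • d)) ⟪f', d⟫ 0 := by
  have hline : HasDerivAt (fun t : ℝ => x + t • d) d 0 := by
    simpa using ((hasDerivAt_id (0 : ℝ)).smul_const d).const_add x
  have hf2 : HasFDerivAt f (InnerProductSpace.toDual ℝ E f') (x + (0 : ℝ) • d) := by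
    simpa using hf.hasFDerivAt
  have := hf2.comp_hasDerivAt 0 hline
  simpa [InnerProductSpace.toDual_apply_apply, Function.comp_def] using this

/-- Gradient inequality for convex functions. -/
lemma aux_grad_ineq {s : Set E} {f : E → ℝ} {f' x z : E} (hs : ConvexOn ℝ s f)
    (hx : x ∈ s) (hz : z ∈ s) (hf : HasGradientAt f f' x) :
    f x + ⟪f', z - x⟫ ≤ f z := by
  have hline := aux_line_deriv hf (z - x)
  have hslope := hasDerivAt_iff_tendsto_slope.1 hline
  have hmono : 𝓝[>] (0 : ℝ) ≤ 𝓝[≠] (0 : ℝ) :=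
    nhdsWithin_mono _ fun t ht => ne_of_gt ht
  have hbound : ∀ᶠ t in 𝓝[>] (0 : ℝ),
      slope (fun t : ℝ => f (x + t • (z - x))) 0 t ≤ f z - f x := by
    filter_upwards [Ioo_mem_nhdsGT (zero_lt_one), self_mem_nhdsWithin] with t ht ht0
    have ht0' : (0 : ℝ) < t := ht0
    have ht1 : t < 1 := ht.2
    have hconv := hs.2 hx hz (by linarith : (0:ℝ) ≤ 1 - t) ht0'.le (by ring)
    have hpt : (1 - t) • x + t • z = x + t • (z - x) := by
      simp [smul_sub, sub_smul, one_smul]; abel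
    rw [hpt] at hconv
    rw [slope_def_field]
    simp only [zero_smul, add_zero, sub_zero]
    rw [div_le_iff₀ ht0']
    simp only [smul_eq_mul] at hconv
    nlinarith [hconv]
  have := le_of_tendsto (hslope.mono_left hmono) hbound
  linarith

/-- First-order necessary condition at a constrained minimum. -/
lemma aux_min_vi {s : Set E} {f : E → ℝ} {f' x z : E} (hs : Convex ℝ s)
    (hx : x ∈ s) (hz : z ∈ s) (hf : HasGradientAt f f' x)
    (hmin : ∀ w ∈ s, f x ≤ f w) : 0 ≤ ⟪f', z - x⟫ := by
  have hline := aux_line_deriv hf (z - x)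
  have hslope := hasDerivAt_iff_tendsto_slope.1 hline
  have hmono : 𝓝[>] (0 : ℝ) ≤ 𝓝[≠] (0 : ℝ) :=
    nhdsWithin_mono _ fun t ht => ne_of_gt ht
  have hbound : ∀ᶠ t in 𝓝[>] (0 : ℝ),
      0 ≤ slope (fun t : ℝ => f (x + t • (z - x))) 0 t := by
    filter_upwards [Ioo_mem_nhdsGT (zero_lt_one), self_mem_nhdsWithin] with t ht ht0
    have ht0' : (0 : ℝ) < t := ht0
    have hmem : x + t • (z - x) ∈ s := by
      have := hs hx hz (by linarith [ht.2] : (0:ℝ) ≤ 1 - t) ht0'.le (by ring)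
      have hpt : (1 - t) • x + t • z = x + t • (z - x) := by
        simp [smul_sub, sub_smul, one_smul]; abel
      rwa [hpt] at this
    rw [slope_def_field]
    simp only [zero_smul, add_zero, sub_zero]
    exact div_nonneg (by linarith [hmin _ hmem]) ht0'.le
  exact ge_of_tendsto (hslope.mono_left hmono) hbound

lemma aux_grad_add_inner {f : E → ℝ} {f' x : E} (hf : HasGradientAt f f' x) (c : E) :
    HasGradientAt (fun z => f z + ⟪z, c⟫) (f' + c) x := by
  have hc : HasFDerivAt (fun z : E => ⟪z, c⟫) (InnerProductSpace.toDual ℝ E c) x := by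
    have := (InnerProductSpace.toDual ℝ E c).hasFDerivAt (x := x)
    refine this.congr_of_eventuallyEq ?_
    filter_upwards with z
    simp [InnerProductSpace.toDual_apply_apply, real_inner_comm]
  have := hf.hasFDerivAt.add hc
  rw [hasGradientAt_iff_hasFDerivAt]
  refine this.congr_fderiv ?_
  ext z
  simp [InnerProductSpace.toDual_apply_apply, inner_add_left]

lemma aux_grad_sub_inner {f : E → ℝ} {f' x : E} (hf : HasGradientAt f f' x) (c : E) :
    HasGradientAt (fun z => f z - ⟪z, c⟫) (f' - c) x := by
  have := aux_grad_add_inner hf (-c)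
  simpa [sub_eq_add_neg, inner_neg_right] using this

omit [CompleteSpace E] in
lemma aux_convexOn_add_inner {s : Set E} {f : E → ℝ} (hf : ConvexOn ℝ s f) (c : E) :
    ConvexOn ℝ s (fun z => f z + ⟪z, c⟫) := by
  refine ⟨hf.1, fun x hx y hy a b ha hb hab => ?_⟩
  have := hf.2 hx hy ha hb hab
  simp only [inner_add_left, real_inner_smul_left, smul_eq_mul] at this ⊢
  nlinarith [this]

omit [CompleteSpace E] in
lemma aux_convexOn_sub_inner {s : Set E} {f : E → ℝ} (hf : ConvexOn ℝ s f) (c : E) :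
    ConvexOn ℝ s (fun z => f z - ⟪z, c⟫) := by
  have := aux_convexOn_add_inner hf (-c)
  simpa [sub_eq_add_neg, inner_neg_right] using this

end Aux

/-- Lemma 3 of the paper. `(x*, y*) ∈ X × Y` is a saddle point of the
bilinear saddle function `L` over `X × Y` if and only if there exist `u*, v*` such that
`x* = Pψ(u*)`, `y* = Pφ(v*)`, `u* = ∇ψ(x*) − ∇F(x*) − H y*` and
`v* = ∇φ(y*) − ∇G(y*) + Hᵀ x*`, i.e. `(x*, u*, y*, v*)` is an equilibrium point of the
accelerated dynamics. -/
theorem stmt_6 (p q : ℕ)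
    (X : Set (EuclideanSpace ℝ (Fin p))) (Y : Set (EuclideanSpace ℝ (Fin q)))
    (hXne : X.Nonempty) (hXcl : IsClosed X) (hXcv : Convex ℝ X)
    (hYne : Y.Nonempty) (hYcl : IsClosed Y) (hYcv : Convex ℝ Y)
    (U : Set (EuclideanSpace ℝ (Fin p))) (V : Set (EuclideanSpace ℝ (Fin q)))
    (hUopen : IsOpen U) (hXU : X ⊆ U) (hVopen : IsOpen V) (hYV : Y ⊆ V)
    (F : EuclideanSpace ℝ (Fin p) → ℝ) (G : EuclideanSpace ℝ (Fin q) → ℝ)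
    (F' : EuclideanSpace ℝ (Fin p) → EuclideanSpace ℝ (Fin p))
    (G' : EuclideanSpace ℝ (Fin q) → EuclideanSpace ℝ (Fin q))
    (hF : ∀ x ∈ U, HasGradientAt F (F' x) x) (hF'c : ContinuousOn F' U)
    (hG : ∀ y ∈ V, HasGradientAt G (G' y) y) (hG'c : ContinuousOn G' V)
    (hFcv : StrictConvexOn ℝ U F) (hGcv : StrictConvexOn ℝ V G)
    (H : Matrix (Fin p) (Fin q) ℝ)
    (L : EuclideanSpace ℝ (Fin p) → EuclideanSpace ℝ (Fin q) → ℝ)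
    (hL : ∀ x y, L x y = F x + ⟪x, Matrix.toEuclideanLin H y⟫ - G y)
    (ψ : EuclideanSpace ℝ (Fin p) → ℝ) (φ : EuclideanSpace ℝ (Fin q) → ℝ)
    (ψ' : EuclideanSpace ℝ (Fin p) → EuclideanSpace ℝ (Fin p))
    (φ' : EuclideanSpace ℝ (Fin q) → EuclideanSpace ℝ (Fin q))
    (hψ : ∀ x, HasGradientAt ψ (ψ' x) x) (hψ'c : Continuous ψ')
    (hφ : ∀ y, HasGradientAt φ (φ' y) y) (hφ'c : Continuous φ')
    (μψ : ℝ) (hμψ : 0 < μψ) (hψsc : StrongConvexOn X μψ ψ)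
    (μφ : ℝ) (hμφ : 0 < μφ) (hφsc : StrongConvexOn Y μφ φ)
    -- mirror maps: Pψ u is the unique minimizer of ψ(·) − ⟪·, u⟫ over X, likewise Pφ
    (Pψ : EuclideanSpace ℝ (Fin p) → EuclideanSpace ℝ (Fin p))
    (Pφ : EuclideanSpace ℝ (Fin q) → EuclideanSpace ℝ (Fin q))
    (hPψ : ∀ u, Pψ u ∈ X ∧ (∀ z ∈ X, ψ (Pψ u) - ⟪Pψ u, u⟫ ≤ ψ z - ⟪z, u⟫) ∧
      (∀ z ∈ X, ψ z - ⟪z, u⟫ = ψ (Pψ u) - ⟪Pψ u, u⟫ → z = Pψ u))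
    (hPφ : ∀ v, Pφ v ∈ Y ∧ (∀ z ∈ Y, φ (Pφ v) - ⟪Pφ v, v⟫ ≤ φ z - ⟪z, v⟫) ∧
      (∀ z ∈ Y, φ z - ⟪z, v⟫ = φ (Pφ v) - ⟪Pφ v, v⟫ → z = Pφ v))
    (xstar : EuclideanSpace ℝ (Fin p)) (ystar : EuclideanSpace ℝ (Fin q))
    (hxstar : xstar ∈ X) (hystar : ystar ∈ Y) :
    (∀ x' ∈ X, ∀ y' ∈ Y, L xstar y' ≤ L xstar ystar ∧ L xstar ystar ≤ L x' ystar) ↔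
    (∃ ustar vstar, xstar = Pψ ustar ∧ ystar = Pφ vstar ∧
      ustar = ψ' xstar - F' xstar - Matrix.toEuclideanLin H ystar ∧
      vstar = φ' ystar - G' ystar + Matrix.toEuclideanLin H.transpose xstar) := by
  classical
  set A : EuclideanSpace ℝ (Fin q) →ₗ[ℝ] EuclideanSpace ℝ (Fin p) := Matrix.toEuclideanLin H
    with hAdef
  set B : EuclideanSpace ℝ (Fin p) →ₗ[ℝ] EuclideanSpace ℝ (Fin q) :=
    Matrix.toEuclideanLin H.transpose with hBdef
  have hHt : ∀ (x : EuclideanSpace ℝ (Fin p)) (y : EuclideanSpace ℝ (Fin q)),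
      ⟪B x, y⟫ = ⟪x, A y⟫ := by
    intro x y
    rw [hBdef, hAdef, ← Matrix.conjTranspose_eq_transpose_of_trivial,
      Matrix.toEuclideanLin_conjTranspose_eq_adjoint]
    exact LinearMap.adjoint_inner_left _ _ _
  -- convexity facts
  have hψcv : ConvexOn ℝ X ψ := hψsc.convexOn (fun r => by positivity)
  have hφcv : ConvexOn ℝ Y φ := hφsc.convexOn (fun r => by positivity)
  -- x-side objective and y-side objective
  have hFobj : ∀ x y, L x y = (F x + ⟪x, A y⟫) - G y := fun x y => by
    rw [hL x y]
  have hGobj : ∀ x y, L x y = F x - (G y - ⟪y, B x⟫) := by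
    intro x y
    rw [hL x y]
    have h : ⟪y, B x⟫ = ⟪x, A y⟫ := by rw [real_inner_comm]; exact hHt x y
    rw [← h]; ring
  constructor
  · rintro hsad
    refine ⟨ψ' xstar - F' xstar - A ystar, φ' ystar - G' ystar + B xstar, ?_, ?_, rfl, rfl⟩
    · set u := ψ' xstar - F' xstar - A ystar with hu
      have hFgrad : HasGradientAt (fun x => F x + ⟪x, A ystar⟫) (F' xstar + A ystar) xstar :=
        aux_grad_add_inner (hF xstar (hXU hxstar)) _
      have hminF : ∀ w ∈ X, F xstar + ⟪xstar, A ystar⟫ ≤ F w + ⟪w, A ystar⟫ := by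
        intro w hw
        have := (hsad w hw ystar hystar).2
        rw [hL xstar ystar, hL w ystar] at this
        simp only [hAdef] at this ⊢
        linarith
      have hVI : ∀ z ∈ X, (0:ℝ) ≤ ⟪F' xstar + A ystar, z - xstar⟫ := fun z hz =>
        aux_min_vi hXcv hxstar hz hFgrad hminF
      have hgconv : ConvexOn ℝ X (fun z => ψ z - ⟪z, u⟫) := aux_convexOn_sub_inner hψcv u
      have hggrad : HasGradientAt (fun z => ψ z - ⟪z, u⟫) (ψ' xstar - u) xstar :=
        aux_grad_sub_inner (hψ xstar) u
      have h2 : ψ' xstar - u = F' xstar + A ystar := by rw [hu]; abel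
      have hgmin : ∀ z ∈ X, ψ xstar - ⟪xstar, u⟫ ≤ ψ z - ⟪z, u⟫ := by
        intro z hz
        have h1 := aux_grad_ineq hgconv hxstar hz hggrad
        rw [h2] at h1
        have := hVI z hz
        linarith
      obtain ⟨hPmem, hPmin, hPuniq⟩ := hPψ u
      exact hPuniq xstar hxstar (le_antisymm (hgmin _ hPmem) (hPmin xstar hxstar))
    · set v := φ' ystar - G' ystar + B xstar with hv
      have hGgrad : HasGradientAt (fun y => G y - ⟪y, B xstar⟫) (G' ystar - B xstar) ystar :=
        aux_grad_sub_inner (hG ystar (hYV hystar)) _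
      have hminG : ∀ w ∈ Y, G ystar - ⟪ystar, B xstar⟫ ≤ G w - ⟪w, B xstar⟫ := by
        intro w hw
        have := (hsad xstar hxstar w hw).1
        rw [hGobj xstar w, hGobj xstar ystar] at this
        linarith
      have hVI : ∀ z ∈ Y, (0:ℝ) ≤ ⟪G' ystar - B xstar, z - ystar⟫ := fun z hz =>
        aux_min_vi hYcv hystar hz hGgrad hminG
      have hgconv : ConvexOn ℝ Y (fun z => φ z - ⟪z, v⟫) := aux_convexOn_sub_inner hφcv v
      have hggrad : HasGradientAt (fun z => φ z - ⟪z, v⟫) (φ' ystar - v) ystar :=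
        aux_grad_sub_inner (hφ ystar) v
      have h2 : φ' ystar - v = G' ystar - B xstar := by rw [hv]; abel
      have hgmin : ∀ z ∈ Y, φ ystar - ⟪ystar, v⟫ ≤ φ z - ⟪z, v⟫ := by
        intro z hz
        have h1 := aux_grad_ineq hgconv hystar hz hggrad
        rw [h2] at h1
        have := hVI z hz
        linarith
      obtain ⟨hPmem, hPmin, hPuniq⟩ := hPφ v
      exact hPuniq ystar hystar (le_antisymm (hgmin _ hPmem) (hPmin ystar hystar))
  · rintro ⟨u, v, hxP, hyP, hu, hv⟩ x' hx' y' hy'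
    -- the variational inequalities from the mirror-map characterizations
    have hψgrad : HasGradientAt (fun z => ψ z - ⟪z, u⟫) (ψ' xstar - u) xstar :=
      aux_grad_sub_inner (hψ xstar) u
    have hψmin : ∀ w ∈ X, ψ xstar - ⟪xstar, u⟫ ≤ ψ w - ⟪w, u⟫ := by
      intro w hw
      have := (hPψ u).2.1 w hw
      rw [← hxP] at this
      exact this
    have hVIx : ∀ z ∈ X, (0:ℝ) ≤ ⟪F' xstar + A ystar, z - xstar⟫ := by
      intro z hz
      have := aux_min_vi hXcv hxstar hz hψgrad hψmin
      have h2 : ψ' xstar - u = F' xstar + A ystar := by rw [hu, hAdef]; abel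
      rwa [h2] at this
    have hφgrad : HasGradientAt (fun z => φ z - ⟪z, v⟫) (φ' ystar - v) ystar :=
      aux_grad_sub_inner (hφ ystar) v
    have hφmin : ∀ w ∈ Y, φ ystar - ⟪ystar, v⟫ ≤ φ w - ⟪w, v⟫ := by
      intro w hw
      have := (hPφ v).2.1 w hw
      rw [← hyP] at this
      exact this
    have hVIy : ∀ z ∈ Y, (0:ℝ) ≤ ⟪G' ystar - B xstar, z - ystar⟫ := by
      intro z hz
      have := aux_min_vi hYcv hystar hz hφgrad hφmin
      have h2 : φ' ystar - v = G' ystar - B xstar := by rw [hv, hBdef]; abel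
      rwa [h2] at this
    constructor
    · -- L xstar y' ≤ L xstar ystar
      have hkconv : ConvexOn ℝ V (fun y => G y - ⟪y, B xstar⟫) :=
        aux_convexOn_sub_inner hGcv.convexOn (B xstar)
      have hkgrad : HasGradientAt (fun y => G y - ⟪y, B xstar⟫) (G' ystar - B xstar) ystar :=
        aux_grad_sub_inner (hG ystar (hYV hystar)) _
      have h1 := aux_grad_ineq hkconv (hYV hystar) (hYV hy') hkgrad
      have h2 := hVIy y' hy'
      rw [hGobj xstar y', hGobj xstar ystar]
      linarith
    · -- L xstar ystar ≤ L x' ystar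
      have hhconv : ConvexOn ℝ U (fun x => F x + ⟪x, A ystar⟫) :=
        aux_convexOn_add_inner hFcv.convexOn (A ystar)
      have hhgrad : HasGradientAt (fun x => F x + ⟪x, A ystar⟫) (F' xstar + A ystar) xstar :=
        aux_grad_add_inner (hF xstar (hXU hxstar)) _
      have h1 := aux_grad_ineq hhconv (hXU hxstar) (hXU hx') hhgrad
      have h2 := hVIx x' hx'
      rw [hFobj xstar ystar, hFobj x' ystar]
      linarith
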